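/- Let F be a continuous, strictly increasing cumulative distribution function on [0,1] with F(0)=0, F(1)=1, let n ≥ 2, and let p_1,...,p_n ∈ (0,1) be prices with F(p_i) > 0 for all i. Then there exists a vector T = (T_1,...,T_n) ∈ ℝ^n such that T_i · ∏_{j ≠ i} F(T_j) = p_i for all i (an equilibrium of the posted-price public goods game on the complete graph). -/

import Mathlib

/-- First-order condition at a point that minimizes `f` on an interval to its right. -/
private lemma aux_min_deriv_right {f f' : ℝ → ℝ} (hd : ∀ t, HasDerivAt f (f' t) t)
    (hc : Continuous f') {m R : ℝ} (hmR : m < R)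
    (hmin : ∀ t, m ≤ t → t ≤ R → f m ≤ f t) : 0 ≤ f' m := by
  by_contra hneg
  push_neg at hneg
  have hU : IsOpen {t : ℝ | f' t < 0} := isOpen_lt hc continuous_const
  obtain ⟨ε, hε, hball⟩ := Metric.isOpen_iff.1 hU m hneg
  set δ := min (ε / 2) (R - m) with hδ
  have hδpos : 0 < δ := lt_min (by linarith) (by linarith)
  have hδε : δ ≤ ε / 2 := min_le_left _ _
  have hδR : δ ≤ R - m := min_le_right _ _
  have hmb : m < m + δ := by linarith
  have hcont : ContinuousOn f (Set.Icc m (m + δ)) :=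
    fun x _ => (hd x).continuousAt.continuousWithinAt
  obtain ⟨ξ, hξ, hslope⟩ := exists_hasDerivAt_eq_slope f f' hmb hcont (fun x _ => hd x)
  have hξball : ξ ∈ Metric.ball m ε := by
    rw [Metric.mem_ball, Real.dist_eq, abs_of_pos (by linarith [hξ.1] : (0:ℝ) < ξ - m)]
    have h2 : ξ < m + δ := hξ.2
    linarith
  have hfξ : f' ξ < 0 := hball hξball
  have hle : f m ≤ f (m + δ) := hmin _ (by linarith) (by linarith)
  rw [hslope] at hfξ
  have hpos : (0:ℝ) < m + δ - m := by linarith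
  have : 0 ≤ (f (m + δ) - f m) / (m + δ - m) := div_nonneg (by linarith) hpos.le
  linarith

/-- First-order condition at a point that minimizes `f` on an interval to its left. -/
private lemma aux_min_deriv_left {f f' : ℝ → ℝ} (hd : ∀ t, HasDerivAt f (f' t) t)
    (hc : Continuous f') {L m : ℝ} (hLm : L < m)
    (hmin : ∀ t, L ≤ t → t ≤ m → f m ≤ f t) : f' m ≤ 0 := by
  by_contra hneg
  push_neg at hneg
  have hU : IsOpen {t : ℝ | 0 < f' t} := isOpen_lt continuous_const hc
  obtain ⟨ε, hε, hball⟩ := Metric.isOpen_iff.1 hU m hneg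
  set δ := min (ε / 2) (m - L) with hδ
  have hδpos : 0 < δ := lt_min (by linarith) (by linarith)
  have hδε : δ ≤ ε / 2 := min_le_left _ _
  have hδL : δ ≤ m - L := min_le_right _ _
  have hmb : m - δ < m := by linarith
  have hcont : ContinuousOn f (Set.Icc (m - δ) m) :=
    fun x _ => (hd x).continuousAt.continuousWithinAt
  obtain ⟨ξ, hξ, hslope⟩ := exists_hasDerivAt_eq_slope f f' hmb hcont (fun x _ => hd x)
  have hξball : ξ ∈ Metric.ball m ε := by
    rw [Metric.mem_ball, Real.dist_eq, abs_of_neg (by linarith [hξ.2] : ξ - m < 0)]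
    have h1 : m - δ < ξ := hξ.1
    linarith
  have hfξ : 0 < f' ξ := hball hξball
  have hle : f m ≤ f (m - δ) := hmin _ (by linarith) (by linarith)
  rw [hslope] at hfξ
  have hpos : (0:ℝ) < m - (m - δ) := by linarith
  have : (f m - f (m - δ)) / (m - (m - δ)) ≤ 0 := div_nonpos_of_nonpos_of_nonneg (by linarith) hpos.le
  linarith

/-- Existence of an equilibrium of the posted-price public goods game on
the complete graph. -/
theorem stmt_0 (F : ℝ → ℝ) (hcont : Continuous F)
    (hmono : StrictMonoOn F (Set.Icc (0:ℝ) 1))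
    (hF0 : F 0 = 0) (hF1 : ∀ x : ℝ, 1 ≤ x → F x = 1)
    (n : ℕ) (hn : 2 ≤ n) (p : Fin n → ℝ)
    (hp : ∀ i, p i ∈ Set.Ioo (0:ℝ) 1)
    (hFp : ∀ i, 0 < F (p i)) :
    ∃ T : Fin n → ℝ, ∀ i,
      T i * ∏ j ∈ Finset.univ.erase i, F (T j) = p i := by
  classical
  have hF1' : F 1 = 1 := hF1 1 le_rfl
  have h01 : (0:ℝ) ∈ Set.Icc (0:ℝ) 1 := by norm_num
  have h11 : (1:ℝ) ∈ Set.Icc (0:ℝ) 1 := by norm_num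
  have hFmono : MonotoneOn F (Set.Icc (0:ℝ) 1) := hmono.monotoneOn
  have hinj : ∀ s ∈ Set.Icc (0:ℝ) 1, ∀ t ∈ Set.Icc (0:ℝ) 1, F s = F t → s = t := by
    intro s hs t ht hst
    rcases lt_trichotomy s t with h | h | h
    · exact absurd hst (ne_of_lt (hmono hs ht h))
    · exact h
    · exact absurd hst.symm (ne_of_lt (hmono ht hs h))
  -- the clamp to [0,1]
  have hclampmem : ∀ x : ℝ, max 0 (min x 1) ∈ Set.Icc (0:ℝ) 1 :=
    fun x => ⟨le_max_left _ _, max_le (by norm_num) (min_le_right _ _)⟩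
  have hclamp_id : ∀ x ∈ Set.Icc (0:ℝ) 1, max 0 (min x 1) = x := by
    intro x hx
    rw [min_eq_left hx.2, max_eq_right hx.1]
  -- inverse of F on [0,1]
  have hsurj : ∀ x : ℝ, ∃ t, t ∈ Set.Icc (0:ℝ) 1 ∧ F t = max 0 (min x 1) := by
    intro x
    have h1 : max 0 (min x 1) ∈ Set.Icc (F 0) (F 1) := by
      rw [hF0, hF1']; exact hclampmem x
    obtain ⟨t, ht, hFt⟩ := intermediate_value_Icc (by norm_num : (0:ℝ) ≤ 1)
      hcont.continuousOn h1
    exact ⟨t, ht, hFt⟩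
  choose G0 hG0mem hG0F using hsurj
  have hFmem : ∀ t ∈ Set.Icc (0:ℝ) 1, F t ∈ Set.Icc (0:ℝ) 1 := by
    intro t ht
    constructor
    · rw [← hF0]; exact hFmono h01 ht ht.1
    · rw [← hF1']; exact hFmono ht h11 ht.2
  have hG0_of_F : ∀ t ∈ Set.Icc (0:ℝ) 1, G0 (F t) = t := by
    intro t ht
    exact hinj _ (hG0mem _) _ ht (by rw [hG0F, hclamp_id _ (hFmem t ht)])
  have hG0_pos : ∀ x : ℝ, 0 < x → 0 < G0 x := by
    intro x hx
    rcases eq_or_lt_of_le (hG0mem x).1 with h | h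
    · exfalso
      have : F (G0 x) = max 0 (min x 1) := hG0F x
      rw [← h, hF0] at this
      have hxmin : 0 < min x 1 := lt_min hx one_pos
      have h2 : (0:ℝ) < max 0 (min x 1) := lt_max_of_lt_right hxmin
      linarith
    · exact h
  have hG0_mono : Monotone G0 := by
    intro x y hxy
    have hcl : max 0 (min x 1) ≤ max 0 (min y 1) :=
      max_le_max le_rfl (min_le_min hxy le_rfl)
    by_contra h
    push_neg at h
    have h2 := hmono (hG0mem y) (hG0mem x) h
    rw [hG0F, hG0F] at h2
    exact absurd (lt_of_le_of_lt hcl h2) (lt_irrefl _)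
  -- a globally continuous extension of G0
  set Gbar : ℝ → ℝ := fun x => G0 x + (x - max 0 (min x 1)) with hGbar
  have hGbar_mono : Monotone Gbar := by
    intro x y hxy
    have h1 : G0 x ≤ G0 y := hG0_mono hxy
    have h2 : max 0 (min y 1) - max 0 (min x 1) ≤ y - x := by
      simp only [min_def, max_def]
      split_ifs <;> linarith
    simp only [hGbar]
    linarith
  have hG0_0 : G0 0 = 0 := by
    have := hG0_of_F 0 h01
    rwa [hF0] at this
  have hG0_1 : G0 1 = 1 := by
    have := hG0_of_F 1 h11
    rwa [hF1'] at this
  have hG0_clamp : ∀ x : ℝ, G0 x = G0 (max 0 (min x 1)) := by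
    intro x
    apply hinj _ (hG0mem _) _ (hG0mem _)
    rw [hG0F, hG0F, hclamp_id _ (hclampmem x)]
  have hGbar_surj : Function.Surjective Gbar := by
    intro z
    rcases le_total z 0 with hz | hz
    · refine ⟨z, ?_⟩
      have hmin : min z 1 = z := min_eq_left (hz.trans (by norm_num))
      have hmax : max 0 (min z 1) = 0 := by rw [hmin]; exact max_eq_left hz
      have hG0z : G0 z = 0 := by
        rw [hG0_clamp z, hmax, hG0_0]
      simp only [hGbar, hG0z, hmax]
      ring
    · rcases le_total z 1 with hz1 | hz1
      · refine ⟨F z, ?_⟩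
        have hFz : F z ∈ Set.Icc (0:ℝ) 1 := hFmem z ⟨hz, hz1⟩
        simp only [hGbar]
        rw [hclamp_id _ hFz, hG0_of_F z ⟨hz, hz1⟩]
        ring
      · refine ⟨z, ?_⟩
        have hmin : min z 1 = 1 := min_eq_right hz1
        have hmax : max 0 (min z 1) = 1 := by rw [hmin]; exact max_eq_right (by norm_num)
        have hG0z : G0 z = 1 := by rw [hG0_clamp z, hmax, hG0_1]
        simp only [hGbar, hG0z, hmax]
        ring
  have hGbar_cont : Continuous Gbar := hGbar_mono.continuous_of_surjective hGbar_surj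
  -- the function h0
  set q : ℝ → ℝ := fun s => min (Real.exp (-s)) 1 with hqdef
  have hq_pos : ∀ s, 0 < q s := fun s => lt_min (Real.exp_pos _) one_pos
  have hq_le1 : ∀ s, q s ≤ 1 := fun s => min_le_right _ _
  have hq_mem : ∀ s, q s ∈ Set.Icc (0:ℝ) 1 := fun s => ⟨(hq_pos s).le, hq_le1 s⟩
  have hq_cont : Continuous q := (Real.continuous_exp.comp continuous_neg).min continuous_const
  set h0 : ℝ → ℝ := fun s => Real.log (G0 (q s)) with hh0def
  have hGbar_eq : ∀ s, Gbar (q s) = G0 (q s) := by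
    intro s
    simp only [hGbar]
    rw [hclamp_id _ (hq_mem s)]
    ring
  have hG0q_pos : ∀ s, 0 < G0 (q s) := fun s => hG0_pos _ (hq_pos s)
  have hh0_cont : Continuous h0 := by
    have h1 : Continuous fun s => Gbar (q s) := hGbar_cont.comp hq_cont
    have h2 : Continuous fun s => G0 (q s) := by
      have : (fun s => Gbar (q s)) = fun s => G0 (q s) := funext hGbar_eq
      rwa [this] at h1
    exact h2.log fun s => (hG0q_pos s).ne'
  have hh0_nonpos : ∀ s, h0 s ≤ 0 :=
    fun s => Real.log_nonpos (hG0mem (q s)).1 (hG0mem (q s)).2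
  have hh0_zero : ∀ s, s ≤ 0 → h0 s = 0 := by
    intro s hs
    have hqs : q s = 1 := min_eq_right (Real.one_le_exp (by linarith))
    simp only [hh0def, hqs, hG0_1, Real.log_one]
  set negh : ℝ → ℝ := fun s => -h0 s with hneghdef
  have hnegh_cont : Continuous negh := hh0_cont.neg
  have hnegh_nonneg : ∀ s, 0 ≤ negh s := fun s => neg_nonneg.2 (hh0_nonpos s)
  -- the constants
  set b : Fin n → ℝ := fun i => -Real.log (p i) with hbdef
  have hbpos : ∀ i, 0 < b i := fun i => neg_pos.2 (Real.log_neg (hp i).1 (hp i).2)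
  set B : ℝ := ∑ i, b i with hBdef
  have hbB : ∀ i, b i ≤ B :=
    fun i => Finset.single_le_sum (fun j _ => (hbpos j).le) (Finset.mem_univ i)
  have i0 : Fin n := ⟨0, by omega⟩
  have hBpos : 0 < B := lt_of_lt_of_le (hbpos i0) (hbB i0)
  set ε' : ℝ := Real.exp (-(B + 1)) with hε'def
  have hε'pos : 0 < ε' := Real.exp_pos _
  have hε'le1 : ε' ≤ 1 := Real.exp_le_one_iff.2 (by linarith)
  have hFε'pos : 0 < F ε' := by
    have := hmono h01 ⟨hε'pos.le, hε'le1⟩ hε'pos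
    rwa [hF0] at this
  set c : ℝ := max 1 (1 - Real.log (F ε')) with hcdef
  have hc1 : (1:ℝ) ≤ c := le_max_left _ _
  have hcpos : (0:ℝ) < c := by linarith
  have hctail : ∀ s, c ≤ s → B + 1 ≤ negh s := by
    intro s hs
    have hs0 : (0:ℝ) ≤ s := by linarith
    have hqs : q s = Real.exp (-s) := min_eq_left (Real.exp_le_one_iff.2 (by linarith))
    have h1 : Real.exp (-s) ≤ F ε' := by
      have ha : 1 - Real.log (F ε') ≤ s := le_trans (le_max_right _ _) hs
      have hb' : -s ≤ Real.log (F ε') := by linarith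
      calc Real.exp (-s) ≤ Real.exp (Real.log (F ε')) := Real.exp_le_exp.2 hb'
        _ = F ε' := Real.exp_log hFε'pos
    have h2 : G0 (q s) ≤ ε' := by
      by_contra h
      push_neg at h
      have h3 := hmono ⟨hε'pos.le, hε'le1⟩ (hG0mem (q s)) h
      rw [hG0F, hclamp_id _ (hq_mem s), hqs] at h3
      linarith
    have h3 : h0 s ≤ -(B + 1) := by
      calc h0 s = Real.log (G0 (q s)) := rfl
        _ ≤ Real.log ε' := Real.log_le_log (hG0q_pos s) h2
        _ = -(B + 1) := Real.log_exp _
    simp only [hneghdef]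
    linarith
  -- the primitive
  set H0 : ℝ → ℝ := fun t => ∫ s in (0:ℝ)..t, negh s with hH0def
  have hH0d : ∀ t, HasDerivAt H0 (negh t) t :=
    fun t => (hnegh_cont.integral_hasStrictDerivAt 0 t).hasDerivAt
  have hH0c : Continuous H0 :=
    continuous_iff_continuousAt.2 fun t => (hH0d t).continuousAt
  have hH0_nonneg : ∀ t, 0 ≤ t → 0 ≤ H0 t := fun t ht =>
    intervalIntegral.integral_nonneg ht fun x _ => hnegh_nonneg x
  set C : ℝ := (B + 1) * c with hCdef
  have hWlow : ∀ (i : Fin n) (t : ℝ), 0 ≤ t → t - C ≤ H0 t - b i * t := by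
    intro i t ht
    rcases le_total t c with h | h
    · have h1 : 0 ≤ H0 t := hH0_nonneg t ht
      have h2 : b i * t ≤ B * c := mul_le_mul (hbB i) h ht hBpos.le
      have h3 : (B + 1) * c = B * c + c := by ring
      linarith
    · have int1 : IntervalIntegrable negh MeasureTheory.volume 0 c :=
        hnegh_cont.intervalIntegrable _ _
      have int2 : IntervalIntegrable negh MeasureTheory.volume c t :=
        hnegh_cont.intervalIntegrable _ _
      have hsplit : (∫ s in (0:ℝ)..c, negh s) + ∫ s in c..t, negh s = H0 t :=
        intervalIntegral.integral_add_adjacent_intervals int1 int2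
      have h1 : 0 ≤ ∫ s in (0:ℝ)..c, negh s :=
        intervalIntegral.integral_nonneg hcpos.le fun x _ => hnegh_nonneg x
      have h2 : (t - c) * (B + 1) ≤ ∫ s in c..t, negh s := by
        have hmono' := intervalIntegral.integral_mono_on (μ := MeasureTheory.volume)
          (f := fun _ => B + 1) (g := negh) h
          (intervalIntegrable_const) int2 (fun x hx => hctail x hx.1)
        simp only [intervalIntegral.integral_const, smul_eq_mul] at hmono'
        nlinarith [hmono']
      have h3 : b i * t ≤ B * t := mul_le_mul_of_nonneg_right (hbB i) ht
      nlinarith [hsplit, h1, h2, h3]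
  set R : ℝ := n * C + 1 with hRdef
  have hCpos : 0 < C := mul_pos (by linarith) hcpos
  have hRpos : 0 < R := by
    have : (0:ℝ) ≤ (n : ℝ) * C := mul_nonneg (Nat.cast_nonneg n) hCpos.le
    linarith
  -- the potential function
  set E : (Fin n → ℝ) → ℝ := fun v =>
    (∑ i, v i) ^ 2 / 2 - (∑ i, (v i) ^ 2) / 2 + ∑ i, (H0 (v i) - b i * v i) with hEdef
  have hEc : Continuous E := by
    have h1 : Continuous fun v : Fin n → ℝ => ∑ i, v i :=
      continuous_finset_sum _ fun i _ => continuous_apply i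
    have h2 : Continuous fun v : Fin n → ℝ => ∑ i, (v i) ^ 2 :=
      continuous_finset_sum _ fun i _ => (continuous_apply i).pow 2
    have h3 : Continuous fun v : Fin n → ℝ => ∑ i, (H0 (v i) - b i * v i) :=
      continuous_finset_sum _ fun i _ =>
        (hH0c.comp (continuous_apply i)).sub (continuous_const.mul (continuous_apply i))
    exact (((h1.pow 2).div_const 2).sub (h2.div_const 2)).add h3
  set S : Set (Fin n → ℝ) := Set.Icc 0 (fun _ => R) with hSdef
  have hScomp : IsCompact S := isCompact_Icc
  have h0S : (0 : Fin n → ℝ) ∈ S := ⟨le_rfl, fun i => hRpos.le⟩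
  obtain ⟨v, hvS, hvmin⟩ := hScomp.exists_isMinOn ⟨0, h0S⟩ hEc.continuousOn
  have hv0 : ∀ i, 0 ≤ v i := fun i => hvS.1 i
  have hvR : ∀ i, v i ≤ R := fun i => hvS.2 i
  have hH0_0 : H0 0 = 0 := intervalIntegral.integral_same
  have hE0 : E 0 = 0 := by
    simp [hEdef, hH0_0]
  have hEv0 : E v ≤ 0 := by
    have := isMinOn_iff.1 hvmin 0 h0S
    rwa [hE0] at this
  have hvltR : ∀ i, v i < R := by
    intro i
    rcases lt_or_eq_of_le (hvR i) with h | h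
    · exact h
    exfalso
    have hsum_nonneg : 0 ≤ ∑ j, v j := Finset.sum_nonneg fun j _ => hv0 j
    have hsum_sq : (∑ j, (v j) ^ 2) ≤ (∑ j, v j) ^ 2 := by
      calc ∑ j, (v j) ^ 2 ≤ ∑ j, v j * (∑ k, v k) := by
            apply Finset.sum_le_sum
            intro j _
            have h1 : v j ≤ ∑ k, v k :=
              Finset.single_le_sum (fun k _ => hv0 k) (Finset.mem_univ j)
            have := mul_le_mul_of_nonneg_left h1 (hv0 j)
            rw [sq]; exact this
        _ = (∑ j, v j) ^ 2 := by rw [← Finset.sum_mul, sq]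
    have hlow : ∑ j, (v j - C) ≤ ∑ j, (H0 (v j) - b j * v j) :=
      Finset.sum_le_sum fun j _ => hWlow j _ (hv0 j)
    have hsumC : ∑ j, (v j - C) = (∑ j, v j) - n * C := by
      rw [Finset.sum_sub_distrib, Finset.sum_const, Finset.card_univ, Fintype.card_fin,
        nsmul_eq_mul]
    have h5 : R ≤ ∑ j, v j := by
      rw [← h]
      exact Finset.single_le_sum (fun k _ => hv0 k) (Finset.mem_univ i)
    have h6 : (∑ j, v j) - n * C ≤ E v := by
      simp only [hEdef]
      have hq : 0 ≤ (∑ j, v j) ^ 2 / 2 - (∑ j, (v j) ^ 2) / 2 := by linarith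
      linarith [hlow, hsumC.symm.le, hsumC.ge]
    rw [hRdef] at h5
    linarith
  -- first-order conditions
  have hkey : ∀ i : Fin n,
      h0 (v i) ≤ (∑ j ∈ Finset.univ.erase i, v j) - b i ∧
      (0 < v i → h0 (v i) = (∑ j ∈ Finset.univ.erase i, v j) - b i) := by
    intro i
    set σ : ℝ := ∑ j ∈ Finset.univ.erase i, v j with hσdef
    set Q : ℝ := ∑ j ∈ Finset.univ.erase i, (v j) ^ 2 with hQdef
    set A : ℝ := ∑ j ∈ Finset.univ.erase i, (H0 (v j) - b j * v j) with hAdef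
    set ψ : ℝ → ℝ := fun t =>
      (σ + t) ^ 2 / 2 - (Q + t ^ 2) / 2 + (A + (H0 t - b i * t)) with hψdef
    have hsplit : ∀ (g : Fin n → ℝ → ℝ) (t : ℝ),
        ∑ j, g j (Function.update v i t j) =
          g i t + ∑ j ∈ Finset.univ.erase i, g j (v j) := by
      intro g t
      rw [← Finset.add_sum_erase _ (fun j => g j (Function.update v i t j))
        (Finset.mem_univ i)]
      congr 1
      · rw [Function.update_self]
      · apply Finset.sum_congr rfl
        intro j hj
        rw [Function.update_of_ne (Finset.ne_of_mem_erase hj)]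
    have hψE : ∀ t, E (Function.update v i t) = ψ t := by
      intro t
      simp only [hEdef, hψdef]
      rw [hsplit (fun _ x => x) t, hsplit (fun _ x => x ^ 2) t,
        hsplit (fun j x => H0 x - b j * x) t]
      rw [← hσdef, ← hQdef, ← hAdef]
      ring
    have hψmin : ∀ t, 0 ≤ t → t ≤ R → ψ (v i) ≤ ψ t := by
      intro t ht htR
      have hmem : Function.update v i t ∈ S := by
        constructor
        · intro j
          rcases eq_or_ne j i with hji | hji
          · subst hji; rw [Function.update_self]; exact ht
          · rw [Function.update_of_ne hji]; exact hv0 j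
        · intro j
          rcases eq_or_ne j i with hji | hji
          · subst hji; rw [Function.update_self]; exact htR
          · rw [Function.update_of_ne hji]; exact hvR j
      have h1 := isMinOn_iff.1 hvmin _ hmem
      calc ψ (v i) = E v := by
            rw [← hψE, Function.update_eq_self]
        _ ≤ E (Function.update v i t) := h1
        _ = ψ t := hψE t
    have hψd : ∀ t, HasDerivAt ψ (σ - h0 t - b i) t := by
      intro t
      have h1 : HasDerivAt (fun t : ℝ => (σ + t) ^ 2 / 2) (σ + t) t := by
        have := (((hasDerivAt_id t).const_add σ).pow 2).div_const 2
        refine this.congr_deriv ?_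
        simp
      have h2 : HasDerivAt (fun t : ℝ => (Q + t ^ 2) / 2) t t := by
        have := ((hasDerivAt_pow 2 t).const_add Q).div_const 2
        refine this.congr_deriv ?_
        simp
      have h3 : HasDerivAt (fun t : ℝ => A + (H0 t - b i * t)) (negh t - b i) t := by
        have hb' : HasDerivAt (fun t : ℝ => b i * t) (b i) t := by
          have := (hasDerivAt_id t).const_mul (b i)
          simpa using this
        exact ((hH0d t).sub hb').const_add A
      have := (h1.sub h2).add h3
      refine this.congr_deriv ?_
      simp only [hneghdef]
      ring
    have hcont' : Continuous fun t => σ - h0 t - b i :=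
      ((continuous_const.sub hh0_cont).sub continuous_const)
    constructor
    · have h1 := aux_min_deriv_right hψd hcont' (hvltR i)
        (fun t h1 h2 => hψmin t (le_trans (hv0 i) h1) h2)
      linarith
    · intro hpos
      have h1 := aux_min_deriv_right hψd hcont' (hvltR i)
        (fun t h1 h2 => hψmin t (le_trans (hv0 i) h1) h2)
      have h2 := aux_min_deriv_left hψd hcont' hpos
        (fun t h1 h2 => hψmin t h1 (le_trans h2 (hvltR i).le))
      linarith
  -- construct the equilibrium
  refine ⟨fun i => p i * Real.exp (∑ j ∈ Finset.univ.erase i, v j), ?_⟩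
  have hFT : ∀ j, F (p j * Real.exp (∑ l ∈ Finset.univ.erase j, v l)) =
      Real.exp (-(v j)) := by
    intro j
    set σ : ℝ := ∑ l ∈ Finset.univ.erase j, v l with hσdef
    rcases eq_or_lt_of_le (hv0 j) with h | h
    · -- v j = 0
      have hσb : b j ≤ σ := by
        have h1 := (hkey j).1
        rw [← h, hh0_zero 0 le_rfl] at h1
        linarith
      have hexpb : Real.exp (b j) = 1 / p j := by
        simp only [hbdef]
        rw [Real.exp_neg, Real.exp_log (hp j).1]
        ring
      have hT1 : 1 ≤ p j * Real.exp σ := by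
        have h1 : Real.exp (b j) ≤ Real.exp σ := Real.exp_le_exp.2 hσb
        calc (1:ℝ) = p j * (1 / p j) := by
              rw [mul_one_div, div_self (ne_of_gt (hp j).1)]
          _ = p j * Real.exp (b j) := by rw [hexpb]
          _ ≤ p j * Real.exp σ := mul_le_mul_of_nonneg_left h1 (hp j).1.le
      rw [hF1 _ hT1, ← h]
      simp
    · -- 0 < v j
      have heq := (hkey j).2 h
      have hqv : q (v j) = Real.exp (-(v j)) :=
        min_eq_left (Real.exp_le_one_iff.2 (by linarith))
      have hx_mem : Real.exp (-(v j)) ∈ Set.Icc (0:ℝ) 1 :=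
        ⟨(Real.exp_pos _).le, Real.exp_le_one_iff.2 (by linarith)⟩
      have hG0eq : G0 (Real.exp (-(v j))) = p j * Real.exp σ := by
        have h1 : Real.log (G0 (Real.exp (-(v j)))) = σ - b j := by
          rw [← hqv]; exact heq
        have h2 : G0 (Real.exp (-(v j))) = Real.exp (σ - b j) := by
          rw [← h1, Real.exp_log (hG0_pos _ (Real.exp_pos _))]
        rw [h2, sub_eq_add_neg, Real.exp_add]
        have h3 : Real.exp (-(b j)) = p j := by
          simp only [hbdef, neg_neg]
          exact Real.exp_log (hp j).1
        rw [h3]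
        ring
      rw [← hG0eq, hG0F, hclamp_id _ hx_mem]
  intro i
  have hprod : ∏ j ∈ Finset.univ.erase i,
      F (p j * Real.exp (∑ l ∈ Finset.univ.erase j, v l)) =
      ∏ j ∈ Finset.univ.erase i, Real.exp (-(v j)) :=
    Finset.prod_congr rfl fun j _ => hFT j
  rw [hprod, ← Real.exp_sum]
  rw [mul_assoc, ← Real.exp_add]
  have hsum : (∑ j ∈ Finset.univ.erase i, v j) +
      ∑ j ∈ Finset.univ.erase i, (-(v j)) = 0 := by
    rw [← Finset.sum_add_distrib]
    simp
  rw [hsum, Real.exp_zero, mul_one]
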